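/- Assume N_F > 1 and Λ > Λ^crit, where Λ^crit := 2·(μ_S/(βγ))·φ^crit/(1 + N_F/N_M) and φ^crit is the unique positive solution of 1 + φ(1 + √(1 + 2/φ)) = N_F·exp(−2/(1 + √(1 + 2/φ))). Set M_S* := Λ/μ_S. Then every solution of the reduced SIT system with nonnegative initial data converges to (0,0) as t → +∞; that is, if M, F : [0,∞) → ℝ are continuously differentiable, nonnegative, and satisfy M'(t) = rρ·(F(t)M(t)/(M(t)+γM_S*))·e^{−β(M(t)+F(t))} − μ_M M(t) and F'(t) = (1−r)ρ·(F(t)M(t)/(M(t)+γM_S*))·e^{−β(M(t)+F(t))} − μ_F F(t) for all t ≥ 0, then M(t) → 0 and F(t) → 0. -/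

import Mathlib

-- tangent line lemma: h(x) <= h(xs) for h(x) = x e^{-bx}/(x+A), given b*xs*(xs+A)=A
lemma aux_tangent (b A x xs : ℝ) (hA : 0 < A) (hx : 0 ≤ x) (hxs : 0 < xs) (hb : 0 < b)
    (hroot : b * xs * (xs + A) = A) :
    x * Real.exp (-(b*x)) / (x + A) ≤ xs * Real.exp (-(b*xs)) / (xs + A) := by
  have hxA : 0 < x + A := by linarith
  have hxsA : 0 < xs + A := by linarith
  rw [div_le_div_iff₀ hxA hxsA]
  have hw : Real.exp (-(b*x)) * (1 + b*(x - xs)) ≤ Real.exp (-(b*xs)) := by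
    rw [show -(b*xs) = -(b*x) + b*(x - xs) by ring, Real.exp_add]
    exact mul_le_mul_of_nonneg_left (by linarith [Real.add_one_le_exp (b*(x-xs))]) (Real.exp_pos _).le
  have key : xs*(x+A)*(1+b*(x-xs)) - x*(xs+A) = b*xs*(x-xs)^2 := by
    linear_combination (x - xs) * hroot
  have hu := (Real.exp_pos (-(b*x))).le
  nlinarith [mul_le_mul_of_nonneg_left hw (by positivity : (0:ℝ) ≤ xs*(x+A)),
    mul_nonneg hu (by positivity : (0:ℝ) ≤ b*xs*(x-xs)^2)]

lemma aux_powb (θ u w : ℝ) (NN : ℕ) (hθ : 0 ≤ θ) (hu : 0 ≤ u) (hw : 0 ≤ w) :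
    w^NN * (θ*u - w) ≤ θ^(NN+1) * u^(NN+1) := by
  rcases le_total w (θ*u) with h | h
  · calc w^NN * (θ*u - w) ≤ (θ*u)^NN * (θ*u) := by
          apply mul_le_mul (pow_le_pow_left₀ hw h NN) (by linarith) (by linarith) (by positivity)
       _ = θ^(NN+1) * u^(NN+1) := by rw [← mul_pow, ← pow_succ]
  · have h1 : w^NN * (θ*u - w) ≤ 0 := mul_nonpos_of_nonneg_of_nonpos (by positivity) (by linarith)
    have h2 : (0:ℝ) ≤ θ^(NN+1) * u^(NN+1) := by positivity
    linarith

lemma aux_half (μM μF θ u w G : ℝ) (NN : ℕ) (hμF : 0 < μF) (hμ : μF ≤ μM)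
    (hθ0 : 0 ≤ θ) (hθ1 : θ < 1) (hu : 0 ≤ u) (hw : 0 ≤ w)
    (hG : G ≤ θ * u) (hn : θ^(NN+1) ≤ μF*(1-θ)/(2*μM)) :
    u^NN*(μM*(G-u)) + w^NN*(μF*(G-w)) ≤ -(μF*(1-θ)/2)*u^(NN+1) := by
  have hμM : (0:ℝ) < μM := lt_of_lt_of_le hμF hμ
  have h1 : u^NN*(G-u) ≤ -((1-θ)*u^(NN+1)) := by
    calc u^NN*(G-u) ≤ u^NN*(θ*u-u) :=
        mul_le_mul_of_nonneg_left (by linarith) (by positivity)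
      _ = -((1-θ)*u^(NN+1)) := by rw [pow_succ]; ring
  have h2 : w^NN*(G-w) ≤ θ^(NN+1)*u^(NN+1) := by
    have : w^NN*(G-w) ≤ w^NN*(θ*u-w) :=
      mul_le_mul_of_nonneg_left (by linarith) (by positivity)
    exact this.trans (aux_powb θ u w NN hθ0 hu hw)
  have a1 : μM*(u^NN*(G-u)) ≤ μM*(-((1-θ)*u^(NN+1))) :=
    mul_le_mul_of_nonneg_left h1 hμM.le
  have a2 : μF*(w^NN*(G-w)) ≤ μF*(θ^(NN+1)*u^(NN+1)) :=
    mul_le_mul_of_nonneg_left h2 hμF.le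
  have hint1 : μF*(θ^(NN+1)*u^(NN+1)) ≤ μF*((μF*(1-θ)/(2*μM))*u^(NN+1)) := by
    apply mul_le_mul_of_nonneg_left _ hμF.le
    exact mul_le_mul_of_nonneg_right hn (pow_nonneg hu _)
  have hcoef : μF*(μF*(1-θ)/(2*μM)) ≤ μM*(1-θ)/2 := by
    rw [show μF*(μF*(1-θ)/(2*μM)) = μF^2*(1-θ)/(2*μM) by ring,
      div_le_div_iff₀ (by positivity) (by norm_num : (0:ℝ) < 2)]
    nlinarith [mul_nonneg (sub_nonneg.2 (mul_le_mul hμ hμ hμF.le hμM.le))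
      (by linarith : (0:ℝ) ≤ 1-θ)]
  have hint2 : μF*(μF*(1-θ)/(2*μM))*u^(NN+1) ≤ (μM*(1-θ)/2)*u^(NN+1) :=
    mul_le_mul_of_nonneg_right hcoef (pow_nonneg hu _)
  have hint3 : (0:ℝ) ≤ (μM - μF)*((1-θ)*u^(NN+1)) := by
    apply mul_nonneg (by linarith)
    exact mul_nonneg (by linarith) (pow_nonneg hu _)
  nlinarith [a1, a2, hint1, hint2, hint3]

lemma aux_bracket (μM μF θ u w G : ℝ) (NN : ℕ) (hμF : 0 < μF) (hμ : μF ≤ μM)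
    (hθ0 : 0 ≤ θ) (hθ1 : θ < 1) (hu : 0 ≤ u) (hw : 0 ≤ w)
    (hG : G ≤ θ * max u w) (hn : θ^(NN+1) ≤ μF*(1-θ)/(2*μM)) :
    ((NN:ℝ)+1)*u^NN*(μM*(G-u)) + ((NN:ℝ)+1)*w^NN*(μF*(G-w)) ≤
      -(μF*(1-θ)/4)*(u^(NN+1)+w^(NN+1)) := by
  have hμM : (0:ℝ) < μM := lt_of_lt_of_le hμF hμ
  have hN1 : (1:ℝ) ≤ (NN:ℝ)+1 := by
    have := Nat.cast_nonneg (α := ℝ) NN; linarith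
  have hS : u^NN*(μM*(G-u)) + w^NN*(μF*(G-w)) ≤
      -(μF*(1-θ)/4)*(u^(NN+1)+w^(NN+1)) := by
    rcases le_total w u with hc | hc
    · rw [max_eq_left hc] at hG
      have hS2 := aux_half μM μF θ u w G NN hμF hμ hθ0 hθ1 hu hw hG hn
      have hwu : w^(NN+1) ≤ u^(NN+1) := pow_le_pow_left₀ hw hc _
      nlinarith [mul_nonneg (by apply div_nonneg (mul_nonneg hμF.le (by linarith)) (by norm_num) : (0:ℝ) ≤ μF*(1-θ)/4)
        (sub_nonneg.2 hwu)]
    · rw [max_eq_right hc] at hG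
      have hS2 : w^NN*(μF*(G-w)) + u^NN*(μM*(G-u)) ≤ -(μF*(1-θ)/2)*w^(NN+1) := by
        have h1 : w^NN*(G-w) ≤ -((1-θ)*w^(NN+1)) := by
          calc w^NN*(G-w) ≤ w^NN*(θ*w-w) :=
              mul_le_mul_of_nonneg_left (by linarith) (by positivity)
            _ = -((1-θ)*w^(NN+1)) := by rw [pow_succ]; ring
        have h2 : u^NN*(G-u) ≤ θ^(NN+1)*w^(NN+1) := by
          have : u^NN*(G-u) ≤ u^NN*(θ*w-u) :=
            mul_le_mul_of_nonneg_left (by linarith) (by positivity)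
          exact this.trans (aux_powb θ w u NN hθ0 hw hu)
        have a1 : μF*(w^NN*(G-w)) ≤ μF*(-((1-θ)*w^(NN+1))) :=
          mul_le_mul_of_nonneg_left h1 hμF.le
        have a2 : μM*(u^NN*(G-u)) ≤ μM*(θ^(NN+1)*w^(NN+1)) :=
          mul_le_mul_of_nonneg_left h2 hμM.le
        have hint1 : μM*(θ^(NN+1)*w^(NN+1)) ≤ μM*((μF*(1-θ)/(2*μM))*w^(NN+1)) := by
          apply mul_le_mul_of_nonneg_left _ hμM.le
          exact mul_le_mul_of_nonneg_right hn (pow_nonneg hw _)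
        have hint2 : μM*((μF*(1-θ)/(2*μM))*w^(NN+1)) = (μF*(1-θ)/2)*w^(NN+1) := by
          field_simp
        nlinarith [a1, a2, hint1, hint2]
      have huw : u^(NN+1) ≤ w^(NN+1) := pow_le_pow_left₀ hu hc _
      nlinarith [mul_nonneg (by apply div_nonneg (mul_nonneg hμF.le (by linarith)) (by norm_num) : (0:ℝ) ≤ μF*(1-θ)/4)
        (sub_nonneg.2 huw)]
  have hSneg : u^NN*(μM*(G-u)) + w^NN*(μF*(G-w)) ≤ 0 := by
    have : (0:ℝ) ≤ (μF*(1-θ)/4)*(u^(NN+1)+w^(NN+1)) := by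
      apply mul_nonneg (div_nonneg (mul_nonneg hμF.le (by linarith)) (by norm_num))
      positivity
    linarith
  calc ((NN:ℝ)+1)*u^NN*(μM*(G-u)) + ((NN:ℝ)+1)*w^NN*(μF*(G-w))
      = ((NN:ℝ)+1)*(u^NN*(μM*(G-u)) + w^NN*(μF*(G-w))) := by ring
    _ ≤ 1*(u^NN*(μM*(G-u)) + w^NN*(μF*(G-w))) :=
        mul_le_mul_of_nonpos_right hN1 hSneg
    _ ≤ -(μF*(1-θ)/4)*(u^(NN+1)+w^(NN+1)) := by linarith

lemma aux_key (NM NF A β θ m f : ℝ) (hNM : 0 < NM) (hNF : 0 < NF) (hA : 0 < A)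
    (hβ : 0 < β) (hm : 0 ≤ m) (hf : 0 ≤ f) (hθ : 0 ≤ θ)
    (hsup : ∀ x : ℝ, 0 ≤ x → NF * (x * Real.exp (-(β*(1+NF/NM)*x)) / (x + A)) ≤ θ) :
    f * m / (m + A) * Real.exp (-(β * (m + f))) ≤ θ * max (m/NM) (f/NF) := by
  have hmA : 0 < m + A := by linarith
  rcases le_total (m/NM) (f/NF) with hc | hc
  · -- f/NF is the max
    rw [max_eq_right hc]
    have hfm : NF * m ≤ NM * f := by
      rw [div_le_div_iff₀ hNM hNF] at hc; linarith
    have hf' : NF/NM * m ≤ f := by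
      rw [div_mul_eq_mul_div, div_le_iff₀ hNM]; linarith
    have hexp : Real.exp (-(β * (m + f))) ≤ Real.exp (-(β*(1+NF/NM)*m)) := by
      apply Real.exp_le_exp.2
      have : (1+NF/NM)*m ≤ m + f := by nlinarith
      nlinarith
    calc f * m / (m + A) * Real.exp (-(β * (m + f)))
        ≤ f * m / (m + A) * Real.exp (-(β*(1+NF/NM)*m)) := by
          apply mul_le_mul_of_nonneg_left hexp (by positivity)
      _ = (f/NF) * (NF * (m * Real.exp (-(β*(1+NF/NM)*m)) / (m + A))) := by
          field_simp
      _ ≤ (f/NF) * θ := by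
          apply mul_le_mul_of_nonneg_left (hsup m hm) (by positivity)
      _ = θ * (f/NF) := by ring
  · -- m/NM is the max
    rw [max_eq_left hc]
    set y := NM * f / NF with hy
    have hy0 : 0 ≤ y := by positivity
    have hym : y ≤ m := by
      rw [div_le_div_iff₀ hNF hNM] at hc
      rw [hy, div_le_iff₀ hNF]; linarith
    have hyf : NF/NM * y = f := by rw [hy]; field_simp
    have hexp : Real.exp (-(β * (m + f))) ≤ Real.exp (-(β*(1+NF/NM)*y)) := by
      apply Real.exp_le_exp.2
      have : (1+NF/NM)*y ≤ m + f := by nlinarith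
      nlinarith
    have hNFy : NM * f = NF * y := by rw [hy]; field_simp
    calc f * m / (m + A) * Real.exp (-(β * (m + f)))
        ≤ f * m / (m + A) * Real.exp (-(β*(1+NF/NM)*y)) := by
          apply mul_le_mul_of_nonneg_left hexp (by positivity)
      _ = (m/NM) * (NF * y * Real.exp (-(β*(1+NF/NM)*y)) / (m + A)) := by
          rw [← hNFy]; field_simp
      _ ≤ (m/NM) * (NF * y * Real.exp (-(β*(1+NF/NM)*y)) / (y + A)) := by
          apply mul_le_mul_of_nonneg_left _ (by positivity)
          apply div_le_div_of_nonneg_left (by positivity) (by linarith) (by linarith)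
      _ = (m/NM) * (NF * (y * Real.exp (-(β*(1+NF/NM)*y)) / (y + A))) := by
          rw [mul_assoc, mul_div_assoc]
      _ ≤ (m/NM) * θ := by
          apply mul_le_mul_of_nonneg_left (hsup y hy0) (by positivity)
      _ = θ * (m/NM) := by ring

lemma aux_sign (NF φcrit φA : ℝ) (hNF : 1 < NF) (hφpos : 0 < φcrit)
    (hφuniq : ∀ φ : ℝ, 0 < φ →
      1 + φ * (1 + Real.sqrt (1 + 2 / φ)) =
        NF * Real.exp (-(2 / (1 + Real.sqrt (1 + 2 / φ)))) → φ = φcrit)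
    (hφA : φcrit < φA) :
    NF * Real.exp (-(2 / (1 + Real.sqrt (1 + 2 / φA)))) <
      1 + φA * (1 + Real.sqrt (1 + 2 / φA)) := by
  have hφA0 : 0 < φA := lt_trans hφpos hφA
  by_contra hcon
  push_neg at hcon
  have hgφ : (1 + φA * (1 + Real.sqrt (1 + 2 / φA)) -
      NF * Real.exp (-(2 / (1 + Real.sqrt (1 + 2 / φA))))) ≤ 0 := by linarith
  rcases eq_or_lt_of_le hgφ with hg0 | hgneg
  · have heq : 1 + φA * (1 + Real.sqrt (1 + 2 / φA)) =
        NF * Real.exp (-(2 / (1 + Real.sqrt (1 + 2 / φA)))) := by linarith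
    have := hφuniq φA hφA0 heq
    exact absurd (this ▸ hφA) (lt_irrefl _)
  · set B : ℝ := φA + NF + 1 with hBdef
    have hφB : φA < B := by rw [hBdef]; linarith
    have hB0 : 0 < B := by rw [hBdef]; linarith
    have sqrt_ge_one : ∀ p : ℝ, 0 < p → (1:ℝ) ≤ Real.sqrt (1 + 2 / p) := by
      intro p hp
      have h := Real.sqrt_le_sqrt (show (1:ℝ) ≤ 1 + 2 / p by
        have := div_pos (by norm_num : (0:ℝ) < 2) hp; linarith)
      rwa [Real.sqrt_one] at h
    set g : ℝ → ℝ := fun p => 1 + p * (1 + Real.sqrt (1 + 2 / p)) -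
        NF * Real.exp (-(2 / (1 + Real.sqrt (1 + 2 / p)))) with hgdef
    have hgφA : g φA < 0 := hgneg
    have hgB : 0 < g B := by
      have hsB1 := sqrt_ge_one B hB0
      have hexp1 : Real.exp (-(2 / (1 + Real.sqrt (1 + 2 / B)))) ≤ 1 := by
        rw [Real.exp_le_one_iff]
        have : (0:ℝ) < 2 / (1 + Real.sqrt (1 + 2 / B)) := by positivity
        linarith
      have h1 : NF * Real.exp (-(2 / (1 + Real.sqrt (1 + 2 / B)))) ≤ NF :=
        le_trans (mul_le_mul_of_nonneg_left hexp1 (by linarith)) (by linarith)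
      have h2 : 2 * B ≤ B * (1 + Real.sqrt (1 + 2 / B)) := by nlinarith
      show (0:ℝ) < 1 + B * (1 + Real.sqrt (1 + 2 / B)) -
        NF * Real.exp (-(2 / (1 + Real.sqrt (1 + 2 / B))))
      have hBNF : NF < 2 * B := by rw [hBdef]; linarith
      linarith
    have hne : ∀ p ∈ Set.Icc φA B, p ≠ 0 :=
      fun p hp => ne_of_gt (lt_of_lt_of_le hφA0 hp.1)
    have c1 : ContinuousOn (fun p : ℝ => 1 + 2 / p) (Set.Icc φA B) :=
      continuousOn_const.add (continuousOn_const.div continuousOn_id hne)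
    have c2 : ContinuousOn (fun p : ℝ => Real.sqrt (1 + 2 / p)) (Set.Icc φA B) :=
      Real.continuous_sqrt.comp_continuousOn c1
    have c3 : ContinuousOn (fun p : ℝ => 1 + Real.sqrt (1 + 2 / p)) (Set.Icc φA B) :=
      continuousOn_const.add c2
    have hden : ∀ p ∈ Set.Icc φA B, (1 + Real.sqrt (1 + 2 / p)) ≠ 0 := by
      intro p hp
      have := Real.sqrt_nonneg (1 + 2 / p)
      positivity
    have c4 : ContinuousOn (fun p : ℝ => 2 / (1 + Real.sqrt (1 + 2 / p)))
        (Set.Icc φA B) := continuousOn_const.div c3 hden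
    have c5 : ContinuousOn
        (fun p : ℝ => Real.exp (-(2 / (1 + Real.sqrt (1 + 2 / p))))) (Set.Icc φA B) :=
      Real.continuous_exp.comp_continuousOn c4.neg
    have hcont : ContinuousOn g (Set.Icc φA B) :=
      (continuousOn_const.add (continuousOn_id.mul c3)).sub (continuousOn_const.mul c5)
    have hIVT := intermediate_value_Ioo (le_of_lt hφB) hcont
    obtain ⟨x₀, hx₀mem, hgx₀⟩ := hIVT (Set.mem_Ioo.2 ⟨hgφA, hgB⟩)
    have hx₀pos : 0 < x₀ := lt_trans hφA0 hx₀mem.1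
    have heq : 1 + x₀ * (1 + Real.sqrt (1 + 2 / x₀)) =
        NF * Real.exp (-(2 / (1 + Real.sqrt (1 + 2 / x₀)))) := by
      have : g x₀ = 0 := hgx₀
      simp only [hgdef] at this
      linarith
    have hx₀crit := hφuniq x₀ hx₀pos heq
    have : φcrit < x₀ := lt_trans hφA hx₀mem.1
    rw [hx₀crit] at this
    exact absurd this (lt_irrefl _)

lemma aux_theta (NF b A φcrit : ℝ) (hNF : 1 < NF) (hb : 0 < b) (hA : 0 < A)
    (hφpos : 0 < φcrit)
    (hφuniq : ∀ φ : ℝ, 0 < φ →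
      1 + φ * (1 + Real.sqrt (1 + 2 / φ)) =
        NF * Real.exp (-(2 / (1 + Real.sqrt (1 + 2 / φ)))) → φ = φcrit)
    (hφA : φcrit < b * A / 2) :
    ∃ xs : ℝ, 0 < xs ∧ b * xs * (xs + A) = A ∧
      NF * (xs * Real.exp (-(b * xs)) / (xs + A)) < 1 := by
  have hφ0 : 0 < b * A / 2 := by positivity
  set φ : ℝ := b * A / 2 with hφdef
  set s : ℝ := Real.sqrt (1 + 2 / φ) with hsdef
  have hs1 : (1:ℝ) ≤ s := by
    have h := Real.sqrt_le_sqrt (show (1:ℝ) ≤ 1 + 2 / φ by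
      have := div_pos (by norm_num : (0:ℝ) < 2) hφ0; linarith)
    rwa [Real.sqrt_one] at h
  have hs0 : (0:ℝ) < 1 + s := by linarith
  have hs2 : s ^ 2 = 1 + 2 / φ := Real.sq_sqrt (by positivity)
  have hs2' : φ * s ^ 2 = φ + 2 := by rw [hs2]; field_simp
  set xs : ℝ := A / (φ * (1 + s)) with hxsdef
  have hxs : 0 < xs := by positivity
  have hbeq : b = 2 * φ / A := by rw [hφdef]; field_simp
  have hbxs : b * xs = 2 / (1 + s) := by
    rw [hbeq, hxsdef]; field_simp
  have hxsA2 : xs + A = xs * (1 + φ * (1 + s)) := by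
    have h : xs * (φ * (1 + s)) = A := by rw [hxsdef]; field_simp
    nlinarith [h]
  have hroot : b * xs * (xs + A) = A := by
    rw [hbxs, hxsA2, hxsdef]
    field_simp
    nlinarith [hs2']
  refine ⟨xs, hxs, hroot, ?_⟩
  have hK : (0:ℝ) < 1 + φ * (1 + s) := by positivity
  have hval : NF * (xs * Real.exp (-(b * xs)) / (xs + A)) =
      NF * Real.exp (-(2 / (1 + s))) / (1 + φ * (1 + s)) := by
    rw [hbxs, hxsA2]
    field_simp
  rw [hval, div_lt_one hK]
  have := aux_sign NF φcrit φ hNF hφpos hφuniq hφA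
  rw [← hsdef] at this
  linarith

set_option maxHeartbeats 1000000 in
theorem stmt_7 (r ρ β μM μF μS γ Λ φcrit : ℝ)
    (hr0 : 0 < r) (hr1 : r < 1) (hρ : 0 < ρ) (hβ : 0 < β)
    (hμM : 0 < μM) (hμF : 0 < μF) (hμS : 0 < μS) (hγ : 0 < γ)
    (hμ : μF ≤ μM)
    (hNF : 1 < (1 - r) * ρ / μF)
    (hφpos : 0 < φcrit)
    (hφroot : 1 + φcrit * (1 + Real.sqrt (1 + 2 / φcrit)) =
      ((1 - r) * ρ / μF) * Real.exp (-(2 / (1 + Real.sqrt (1 + 2 / φcrit)))))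
    (hφuniq : ∀ φ : ℝ, 0 < φ →
      1 + φ * (1 + Real.sqrt (1 + 2 / φ)) =
        ((1 - r) * ρ / μF) * Real.exp (-(2 / (1 + Real.sqrt (1 + 2 / φ)))) → φ = φcrit)
    (hΛ : Λ > 2 * (μS / (β * γ)) * φcrit / (1 + ((1 - r) * ρ / μF) / (r * ρ / μM)))
    (M F : ℝ → ℝ)
    (hMnn : ∀ t, 0 ≤ t → 0 ≤ M t) (hFnn : ∀ t, 0 ≤ t → 0 ≤ F t)
    (hdM : ∀ t, 0 ≤ t →
      HasDerivAt M (r * ρ * (F t * M t / (M t + γ * (Λ / μS))) *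
        Real.exp (-(β * (M t + F t))) - μM * M t) t)
    (hdF : ∀ t, 0 ≤ t →
      HasDerivAt F ((1 - r) * ρ * (F t * M t / (M t + γ * (Λ / μS))) *
        Real.exp (-(β * (M t + F t))) - μF * F t) t) :
    Filter.Tendsto M Filter.atTop (nhds 0) ∧ Filter.Tendsto F Filter.atTop (nhds 0) := by
  have h1r : 0 < 1 - r := by linarith
  -- basic quantities
  set NM : ℝ := r * ρ / μM with hNMdef
  set NFv : ℝ := (1 - r) * ρ / μF with hNFdef
  have hNM0 : 0 < NM := div_pos (mul_pos hr0 hρ) hμM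
  have hNF0 : 0 < NFv := by linarith
  have hc0 : 0 < 1 + NFv / NM := by positivity
  have hb0 : 0 < β * (1 + NFv / NM) := by positivity
  have hΛ0 : 0 < Λ := lt_trans (by positivity) hΛ
  have hA0 : 0 < γ * (Λ / μS) := by positivity
  -- φcrit < b*A/2
  have hφA : φcrit < β * (1 + NFv / NM) * (γ * (Λ / μS)) / 2 := by
    have e1 : φcrit = (β * (1 + NFv / NM) * γ / (2 * μS)) *
        (2 * (μS / (β * γ)) * φcrit / (1 + NFv / NM)) := by
      field_simp
    have e2 : (β * (1 + NFv / NM) * γ / (2 * μS)) * Λ =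
        β * (1 + NFv / NM) * (γ * (Λ / μS)) / 2 := by
      field_simp
    calc φcrit = (β * (1 + NFv / NM) * γ / (2 * μS)) *
        (2 * (μS / (β * γ)) * φcrit / (1 + NFv / NM)) := e1
      _ < (β * (1 + NFv / NM) * γ / (2 * μS)) * Λ :=
          mul_lt_mul_of_pos_left hΛ (by positivity)
      _ = β * (1 + NFv / NM) * (γ * (Λ / μS)) / 2 := e2
  -- tangency point and θ₀
  obtain ⟨xs, hxs, hroot, hθlt⟩ := aux_theta NFv (β * (1 + NFv / NM)) (γ * (Λ / μS))
    φcrit hNF hb0 hA0 hφpos hφuniq hφA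
  set θ₀ : ℝ := NFv * (xs * Real.exp (-(β * (1 + NFv / NM) * xs)) /
      (xs + γ * (Λ / μS))) with hθdef
  have hθ0 : 0 ≤ θ₀ := by positivity
  have hsup : ∀ x : ℝ, 0 ≤ x →
      NFv * (x * Real.exp (-(β * (1 + NFv / NM) * x)) / (x + γ * (Λ / μS))) ≤ θ₀ := by
    intro x hx
    exact mul_le_mul_of_nonneg_left
      (aux_tangent (β * (1 + NFv / NM)) (γ * (Λ / μS)) x xs hA0 hx hxs hb0 hroot) hNF0.le
  -- pointwise key bound along trajectory
  have key : ∀ t : ℝ, 0 ≤ t →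
      F t * M t / (M t + γ * (Λ / μS)) * Real.exp (-(β * (M t + F t))) ≤
        θ₀ * max (M t / NM) (F t / NFv) := fun t ht =>
    aux_key NM NFv (γ * (Λ / μS)) β θ₀ (M t) (F t) hNM0 hNF0 hA0 hβ
      (hMnn t ht) (hFnn t ht) hθ0 hsup
  -- choose exponent
  obtain ⟨n, hn⟩ := exists_pow_lt_of_lt_one
    (show (0:ℝ) < μF * (1 - θ₀) / (2 * μM) by
      apply div_pos (mul_pos hμF (by linarith)) (by linarith)) hθlt
  have hn' : θ₀ ^ (n + 1) ≤ μF * (1 - θ₀) / (2 * μM) :=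
    le_trans (pow_le_pow_of_le_one hθ0 hθlt.le (Nat.le_succ n)) hn.le
  -- scaled functions
  set a : ℝ → ℝ := fun t => M t / NM with hadef
  set bf : ℝ → ℝ := fun t => F t / NFv with hbfdef
  have hann : ∀ t, 0 ≤ t → 0 ≤ a t := fun t ht => div_nonneg (hMnn t ht) hNM0.le
  have hbnn : ∀ t, 0 ≤ t → 0 ≤ bf t := fun t ht => div_nonneg (hFnn t ht) hNF0.le
  set G : ℝ → ℝ := fun t => F t * M t / (M t + γ * (Λ / μS)) *
      Real.exp (-(β * (M t + F t))) with hGdef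
  have hda : ∀ t, 0 ≤ t → HasDerivAt a (μM * (G t - a t)) t := by
    intro t ht
    have h := (hdM t ht).div_const NM
    refine h.congr_deriv ?_
    rw [hGdef, hadef, hNMdef]
    field_simp
  have hdb : ∀ t, 0 ≤ t → HasDerivAt bf (μF * (G t - bf t)) t := by
    intro t ht
    have h := (hdF t ht).div_const NFv
    refine h.congr_deriv ?_
    rw [hGdef, hbfdef, hNFdef]
    field_simp
  set Φ : ℝ → ℝ := fun t => a t ^ (n + 1) + bf t ^ (n + 1) with hΦdef
  have hdΦ : ∀ t, 0 ≤ t → HasDerivAt Φ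
      (((n:ℝ)+1) * a t ^ n * (μM * (G t - a t)) +
       ((n:ℝ)+1) * bf t ^ n * (μF * (G t - bf t))) t := by
    intro t ht
    have h1 := (hda t ht).pow (n+1)
    have h2 := (hdb t ht).pow (n+1)
    simp only [Nat.add_sub_cancel, Nat.cast_add, Nat.cast_one] at h1 h2
    exact h1.add h2
  set D : ℝ → ℝ := fun t => ((n:ℝ)+1) * a t ^ n * (μM * (G t - a t)) +
      ((n:ℝ)+1) * bf t ^ n * (μF * (G t - bf t)) with hDdef
  have hdΦ' : ∀ t, 0 ≤ t → HasDerivAt Φ (D t) t := hdΦ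
  set K : ℝ := μF * (1 - θ₀) / 4 with hKdef
  have hK0 : 0 < K := by
    apply div_pos (mul_pos hμF (by linarith)) (by norm_num)
  have hΦbound : ∀ t, 0 ≤ t → D t ≤ -K * Φ t := by
    intro t ht
    have h := aux_bracket μM μF θ₀ (a t) (bf t) (G t) n hμF hμ hθ0 hθlt
      (hann t ht) (hbnn t ht) (key t ht) hn'
    rw [hDdef, hΦdef, hKdef]
    exact h
  set E : ℝ → ℝ := fun t => Φ t * Real.exp (K * t) with hEdef
  have hdE : ∀ t, 0 ≤ t → HasDerivAt E
      (D t * Real.exp (K*t) + Φ t * (Real.exp (K*t) * K)) t := by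
    intro t ht
    have hexp : HasDerivAt (fun y : ℝ => Real.exp (K * y)) (Real.exp (K * t) * K) t := by
      simpa using ((hasDerivAt_id t).const_mul K).exp
    exact (hdΦ' t ht).mul hexp
  have hΦnn : ∀ t, 0 ≤ t → 0 ≤ Φ t := by
    intro t ht
    rw [hΦdef]
    have := hann t ht; have := hbnn t ht
    positivity
  have hEanti : AntitoneOn E (Set.Ici 0) := by
    apply antitoneOn_of_deriv_nonpos (convex_Ici 0)
    · exact fun t ht => (hdE t ht).continuousAt.continuousWithinAt
    · intro t ht
      rw [interior_Ici] at ht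
      exact (hdE t ht.le).differentiableAt.differentiableWithinAt
    · intro t ht
      rw [interior_Ici] at ht
      rw [(hdE t ht.le).deriv]
      have hb := hΦbound t ht.le
      have he := Real.exp_pos (K * t)
      have h1 : D t * Real.exp (K*t) ≤ (-K * Φ t) * Real.exp (K*t) :=
        mul_le_mul_of_nonneg_right hb he.le
      have h0 : (-K * Φ t) * Real.exp (K*t) + Φ t * (Real.exp (K*t) * K) = 0 := by ring
      linarith
  have hdecay : ∀ t : ℝ, 0 ≤ t → Φ t ≤ Φ 0 * Real.exp (-(K * t)) := by
    intro t ht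
    have h := hEanti (Set.self_mem_Ici) (Set.mem_Ici.2 ht) ht
    rw [hEdef] at h
    simp only [mul_zero, Real.exp_zero, mul_one] at h
    calc Φ t = Φ t * Real.exp (K * t) * Real.exp (-(K * t)) := by
          rw [mul_assoc, ← Real.exp_add, add_neg_cancel, Real.exp_zero, mul_one]
      _ ≤ Φ 0 * Real.exp (-(K * t)) :=
          mul_le_mul_of_nonneg_right h (Real.exp_pos _).le
  -- Φ → 0
  have hΦlim : Filter.Tendsto Φ Filter.atTop (nhds 0) := by
    have h1 : Filter.Tendsto (fun t : ℝ => K * t) Filter.atTop Filter.atTop :=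
      Filter.Tendsto.const_mul_atTop hK0 Filter.tendsto_id
    have h2 : Filter.Tendsto (fun t : ℝ => -(K * t)) Filter.atTop Filter.atBot :=
      Filter.tendsto_neg_atTop_atBot.comp h1
    have h3 : Filter.Tendsto (fun t : ℝ => Real.exp (-(K * t))) Filter.atTop (nhds 0) :=
      Real.tendsto_exp_atBot.comp h2
    have h4 : Filter.Tendsto (fun t : ℝ => Φ 0 * Real.exp (-(K * t)))
        Filter.atTop (nhds 0) := by
      have := h3.const_mul (Φ 0)
      simpa using this
    apply squeeze_zero' ?_ ?_ h4
    · exact Filter.eventually_atTop.2 ⟨0, fun t ht => hΦnn t ht⟩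
    · exact Filter.eventually_atTop.2 ⟨0, fun t ht => hdecay t ht⟩
  -- a, bf → 0
  have hcomp : ∀ (g : ℝ → ℝ), (∀ t, 0 ≤ t → 0 ≤ g t) →
      (∀ t, 0 ≤ t → g t ^ (n+1) ≤ Φ t) →
      Filter.Tendsto g Filter.atTop (nhds 0) := by
    intro g hg hgΦ
    rw [Metric.tendsto_atTop]
    intro ε hε
    set ε₁ : ℝ := min ε 1 with hε₁def
    have hε₁0 : 0 < ε₁ := lt_min hε one_pos
    have hε' : 0 < ε₁ ^ (n+1) := pow_pos hε₁0 _
    obtain ⟨N, hN⟩ := Metric.tendsto_atTop.1 hΦlim (ε₁ ^ (n+1)) hε'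
    refine ⟨max N 0, fun t ht => ?_⟩
    have htN : N ≤ t := le_trans (le_max_left _ _) ht
    have ht0 : (0:ℝ) ≤ t := le_trans (le_max_right _ _) ht
    have hΦt := hN t htN
    rw [Real.dist_eq, sub_zero] at hΦt ⊢
    rw [abs_of_nonneg (hg t ht0)]
    by_contra hcon
    push_neg at hcon
    have h5 : ε₁ ≤ g t := le_trans (min_le_left _ _) hcon
    have h6 : ε₁ ^ (n+1) ≤ g t ^ (n+1) := pow_le_pow_left₀ hε₁0.le h5 _
    have h7 : g t ^ (n+1) ≤ Φ t := hgΦ t ht0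
    have h8 : Φ t ≤ |Φ t| := le_abs_self _
    linarith
  have halim : Filter.Tendsto a Filter.atTop (nhds 0) := by
    apply hcomp a hann
    intro t ht
    show a t ^ (n+1) ≤ a t ^ (n + 1) + bf t ^ (n + 1)
    have := pow_nonneg (hbnn t ht) (n+1)
    linarith
  have hblim : Filter.Tendsto bf Filter.atTop (nhds 0) := by
    apply hcomp bf hbnn
    intro t ht
    show bf t ^ (n+1) ≤ a t ^ (n + 1) + bf t ^ (n + 1)
    have := pow_nonneg (hann t ht) (n+1)
    linarith
  constructor
  · have h := halim.const_mul NM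
    rw [mul_zero] at h
    apply h.congr
    intro t
    rw [mul_comm, div_mul_cancel₀ _ (ne_of_gt hNM0)]
  · have h := hblim.const_mul NFv
    rw [mul_zero] at h
    apply h.congr
    intro t
    rw [mul_comm, div_mul_cancel₀ _ (ne_of_gt hNF0)]
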